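/- arXiv:1812.06250 — 5 statements merged into one kernel-verified Lean document; each statement's English description precedes it below -/
import Mathlib

section
/- For u ≥ 0 and R ≥ 0, the supremum of ρ·u + (1/2)ln(1-ρ²) over |ρ| ≤ √(1-e^{-2R}) equals u·√(1-e^{-2R}) - R when R ≤ (1/2)ln((1+√(1+4u²))/2), and equals 2u²/(1+√(1+4u²)) - (1/2)ln((1+√(1+4u²))/2) when R ≥ (1/2)ln((1+√(1+4u²))/2). -/
set_option maxHeartbeats 1000000 in
/-- the constrained supremum w(u,R) of ρ·u + (1/2)ln(1-ρ²) over
|ρ| ≤ √(1-e^{-2R}) equals the stated two-piece formula. -/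
theorem stmt_0 (u R : ℝ) (hu : 0 ≤ u) (hR : 0 ≤ R) :
    (R ≤ (1/2) * Real.log ((1 + Real.sqrt (1 + 4*u^2))/2) →
      sSup {v : ℝ | ∃ ρ : ℝ, |ρ| ≤ Real.sqrt (1 - Real.exp (-2*R)) ∧
          v = ρ*u + (1/2) * Real.log (1 - ρ^2)}
        = u * Real.sqrt (1 - Real.exp (-2*R)) - R) ∧
    ((1/2) * Real.log ((1 + Real.sqrt (1 + 4*u^2))/2) ≤ R →
      sSup {v : ℝ | ∃ ρ : ℝ, |ρ| ≤ Real.sqrt (1 - Real.exp (-2*R)) ∧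
          v = ρ*u + (1/2) * Real.log (1 - ρ^2)}
        = 2*u^2 / (1 + Real.sqrt (1 + 4*u^2))
            - (1/2) * Real.log ((1 + Real.sqrt (1 + 4*u^2))/2)) := by
  set s := Real.sqrt (1 + 4*u^2) with hs_def
  have hs2 : s^2 = 1 + 4*u^2 := Real.sq_sqrt (by positivity)
  have hs0 : 0 ≤ s := Real.sqrt_nonneg _
  have hs1 : 1 ≤ s := by nlinarith
  have h1p : (0:ℝ) < 1 + s := by linarith
  set r := Real.sqrt (1 - Real.exp (-2*R)) with hr_def
  have hexp1 : Real.exp (-2*R) ≤ 1 := Real.exp_le_one_iff.mpr (by linarith)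
  have hexp0 : 0 < Real.exp (-2*R) := Real.exp_pos _
  have hr2 : r^2 = 1 - Real.exp (-2*R) := Real.sq_sqrt (by linarith)
  have hr0 : 0 ≤ r := Real.sqrt_nonneg _
  have h1r : 0 < 1 - r^2 := by rw [hr2]; linarith
  have hlogr : Real.log (1 - r^2) = -2*R := by
    rw [hr2]; simp [Real.log_exp]
  set p := 2*u/(1+s) with hp_def
  have hp0 : 0 ≤ p := by positivity
  have hp2 : 1 - p^2 = 2/(1+s) := by
    rw [hp_def]; field_simp; nlinarith
  have h1p2 : 0 < 1 - p^2 := by rw [hp2]; positivity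
  have hlogp : Real.log (1 - p^2) = -Real.log ((1+s)/2) := by
    rw [hp2, show (2:ℝ)/(1+s) = ((1+s)/2)⁻¹ by field_simp, Real.log_inv]
  have hup : u * (1 - p^2) = p := by
    rw [hp2, hp_def]; ring
  constructor
  · intro hcase
    have h1 : Real.exp (2*R) ≤ (1+s)/2 := by
      calc Real.exp (2*R) ≤ Real.exp (Real.log ((1+s)/2)) :=
            Real.exp_le_exp.mpr (by linarith)
        _ = (1+s)/2 := Real.exp_log (by positivity)
    have h2 : 2/(1+s) ≤ Real.exp (-2*R) := by
      rw [div_le_iff₀ h1p]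
      nlinarith [Real.exp_pos (2*R), Real.exp_pos (-2*R),
        (by rw [← Real.exp_add]; simp : Real.exp (2*R) * Real.exp (-2*R) = 1)]
    have hsq : r^2 ≤ p^2 := by rw [hr2]; nlinarith [hp2]
    have hrp : r ≤ p := by nlinarith
    apply IsGreatest.csSup_eq
    constructor
    · exact ⟨r, by rw [abs_of_nonneg hr0], by rw [hlogr]; ring⟩
    · rintro v ⟨ρ, hρ, rfl⟩
      rw [abs_le] at hρ
      have h1ρ : 0 < 1 - ρ^2 := by nlinarith
      have hlog : Real.log (1-ρ^2) - Real.log (1-r^2) ≤ (1-ρ^2)/(1-r^2) - 1 := by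
        rw [← Real.log_div h1ρ.ne' h1r.ne']
        exact Real.log_le_sub_one_of_pos (by positivity)
      have hdiv : (1-ρ^2)/(1-r^2) - 1 = (r^2-ρ^2)/(1-r^2) := by field_simp; ring
      have h3 : u*(1-p^2) ≤ u*(1-r^2) := mul_le_mul_of_nonneg_left (by linarith) hu
      have hρ2 : ρ ≤ r := hρ.2
      have hkey : r + ρ ≤ 2*u*(1-r^2) := by linarith
      have hrρ : 0 ≤ r - ρ := by linarith
      have hkm : (r-ρ)*(r+ρ) ≤ (r-ρ)*(2*u*(1-r^2)) :=
        mul_le_mul_of_nonneg_left hkey hrρ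
      have hfrac : (r^2-ρ^2)/(1-r^2) ≤ 2*(r-ρ)*u := by
        rw [div_le_iff₀ h1r]
        nlinarith [hkm]
      linarith [hlog, hfrac, hdiv, hlogr]
  · intro hcase
    have h1 : (1+s)/2 ≤ Real.exp (2*R) := by
      calc (1+s)/2 = Real.exp (Real.log ((1+s)/2)) := (Real.exp_log (by positivity)).symm
        _ ≤ Real.exp (2*R) := Real.exp_le_exp.mpr (by linarith)
    have h2 : Real.exp (-2*R) ≤ 2/(1+s) := by
      rw [le_div_iff₀ h1p]
      nlinarith [Real.exp_pos (2*R), Real.exp_pos (-2*R),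
        (by rw [← Real.exp_add]; simp : Real.exp (2*R) * Real.exp (-2*R) = 1)]
    have hsq : p^2 ≤ r^2 := by rw [hr2]; nlinarith [hp2]
    have hpr : p ≤ r := by nlinarith
    have hgoal : 2*u^2/(1+s) - (1/2) * Real.log ((1+s)/2)
        = p*u + (1/2) * Real.log (1-p^2) := by
      rw [hlogp, hp_def]; ring
    apply IsGreatest.csSup_eq
    constructor
    · exact ⟨p, by rw [abs_of_nonneg hp0]; exact hpr, by rw [hgoal]⟩
    · rintro v ⟨ρ, hρ, rfl⟩
      rw [abs_le] at hρ
      have h1ρ : 0 < 1 - ρ^2 := by nlinarith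
      have hlog : Real.log (1-ρ^2) - Real.log (1-p^2) ≤ (1-ρ^2)/(1-p^2) - 1 := by
        rw [← Real.log_div h1ρ.ne' h1p2.ne']
        exact Real.log_le_sub_one_of_pos (by positivity)
      have hdiv : (1-ρ^2)/(1-p^2) - 1 = (p^2-ρ^2)/(1-p^2) := by field_simp; ring
      have hfrac : (p^2-ρ^2)/(1-p^2) ≤ 2*(p-ρ)*u := by
        rw [div_le_iff₀ h1p2]
        nlinarith [sq_nonneg (p-ρ), hup]
      rw [hgoal]
      linarith [hlog, hfrac, hdiv]
end

section
/- For P > 0, σ² > 0, β ≥ 0, and ρ' ∈ [-1,1], the quantity Γ_L(ρ') := (1/2)ln(2πσ²) + inf over (a,b,σ_V²) ∈ ℝ²×(0,∞) of [ (1/(2σ²))(((a-1)² + 2ρ'(a-1)b + b²)P + σ_V²) - (1/2)ln(2πe σ_V²) + (βP/σ²)·max(0, a + ρ'b - ρ'a - b) ] equals (P/σ²)·β̂(1-β̂)·(1-ρ'), where β̂ = min(β, 1/2). -/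
private lemma aux_phi (β s : ℝ) (hβ : 0 ≤ β) :
    (min β (1/2)) * (1 - min β (1/2)) ≤ s^2/4 + β * max 0 (s+1) := by
  set m := min β (1/2) with hm
  have hm1 : m ≤ β := min_le_left _ _
  have hm2 : m ≤ 1/2 := min_le_right _ _
  rcases le_total (s+1) 0 with h|h
  · rw [max_eq_left h]
    nlinarith [sq_nonneg (1 - 2*m),
      mul_nonneg (by linarith : (0:ℝ) ≤ -(s+1)) (by linarith : (0:ℝ) ≤ 1 - s)]
  · rw [max_eq_right h]
    nlinarith [sq_nonneg (s/2 + m), mul_le_mul_of_nonneg_right hm1 h]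

/-- Γ_L(ρ') equals (P/σ²)·β̂(1-β̂)·(1-ρ') with β̂ = min(β,1/2). -/
theorem stmt_4 (P σ2 β r : ℝ) (hP : 0 < P) (hσ : 0 < σ2) (hβ : 0 ≤ β)
    (hr : r ∈ Set.Icc (-1 : ℝ) 1) :
    (1/2) * Real.log (2 * Real.pi * σ2)
      + sInf {v : ℝ | ∃ a b sV : ℝ, 0 < sV ∧
          v = (1/(2*σ2)) * (((a-1)^2 + 2*r*(a-1)*b + b^2) * P + sV)
              - (1/2) * Real.log (2 * Real.pi * Real.exp 1 * sV)
              + (β*P/σ2) * max 0 (a + r*b - r*a - b)}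
      = (P/σ2) * (min β (1/2)) * (1 - min β (1/2)) * (1 - r) := by
  obtain ⟨hr1, hr2⟩ := hr
  set m := min β (1/2) with hmdef
  have hm1 : m ≤ β := min_le_left _ _
  have hm2 : m ≤ 1/2 := min_le_right _ _
  have hm0 : 0 ≤ m := le_min hβ (by norm_num)
  have ht : 0 ≤ 1 - r := by linarith
  have hπ : 0 < 2 * Real.pi * σ2 := by positivity
  set C := (P/σ2) * m * (1 - m) * (1 - r) - (1/2) * Real.log (2*Real.pi*σ2) with hC
  suffices h : sInf {v : ℝ | ∃ a b sV : ℝ, 0 < sV ∧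
          v = (1/(2*σ2)) * (((a-1)^2 + 2*r*(a-1)*b + b^2) * P + sV)
              - (1/2) * Real.log (2 * Real.pi * Real.exp 1 * sV)
              + (β*P/σ2) * max 0 (a + r*b - r*a - b)} = C by
    rw [h, hC]; ring
  have hmem : C ∈ {v : ℝ | ∃ a b sV : ℝ, 0 < sV ∧
          v = (1/(2*σ2)) * (((a-1)^2 + 2*r*(a-1)*b + b^2) * P + sV)
              - (1/2) * Real.log (2 * Real.pi * Real.exp 1 * sV)
              + (β*P/σ2) * max 0 (a + r*b - r*a - b)} := by
    refine ⟨1 - m, m, σ2, hσ, ?_⟩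
    have hlogE : Real.log (2 * Real.pi * Real.exp 1 * σ2)
        = Real.log (2*Real.pi*σ2) + 1 := by
      rw [show 2 * Real.pi * Real.exp 1 * σ2 = (2*Real.pi*σ2) * Real.exp 1 by ring,
        Real.log_mul (ne_of_gt hπ) (Real.exp_ne_zero 1), Real.log_exp]
    have hmax' : max 0 ((1-m) + r*m - r*(1-m) - m) = (1-r)*(1-2*m) := by
      rw [show (1-m) + r*m - r*(1-m) - m = (1-r)*(1-2*m) by ring]
      exact max_eq_right (mul_nonneg ht (by linarith))
    rw [hlogE, hmax', hC]
    have hid : β*(1-2*m) = m*(1-2*m) := by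
      rcases le_total β (1/2) with h|h
      · rw [hmdef, min_eq_left h]
      · rw [hmdef, min_eq_right h]; ring
    have h5 : (1/(2*σ2)) * σ2 = 1/2 := by field_simp
    linear_combination (-(P/σ2)*(1-r)) * hid - h5
  have hlb : ∀ v ∈ {v : ℝ | ∃ a b sV : ℝ, 0 < sV ∧
          v = (1/(2*σ2)) * (((a-1)^2 + 2*r*(a-1)*b + b^2) * P + sV)
              - (1/2) * Real.log (2 * Real.pi * Real.exp 1 * sV)
              + (β*P/σ2) * max 0 (a + r*b - r*a - b)}, C ≤ v := by
    rintro v ⟨a, b, sV, hsV, rfl⟩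
    have hlog2 : Real.log sV - Real.log σ2 ≤ sV/σ2 - 1 := by
      have h := Real.log_le_sub_one_of_pos (show 0 < sV/σ2 by positivity)
      rwa [Real.log_div (ne_of_gt hsV) (ne_of_gt hσ)] at h
    have hlogsV : Real.log (2*Real.pi*Real.exp 1*sV)
        = Real.log (2*Real.pi*σ2) + 1 + (Real.log sV - Real.log σ2) := by
      rw [show 2*Real.pi*Real.exp 1*sV = (2*Real.pi*σ2) * Real.exp 1 * (sV/σ2) by
            field_simp,
        Real.log_mul (by positivity) (by positivity),
        Real.log_mul (ne_of_gt hπ) (Real.exp_ne_zero 1), Real.log_exp,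
        Real.log_div (ne_of_gt hsV) (ne_of_gt hσ)]
    have hmax : max 0 (a + r*b - r*a - b) = (1-r) * max 0 ((a-1-b)+1) := by
      rw [show a + r*b - r*a - b = (1-r)*((a-1-b)+1) by ring,
        mul_max_of_nonneg _ _ ht, mul_zero]
    have hQ : (1-r)*(a-1-b)^2/2 ≤ (a-1)^2 + 2*r*(a-1)*b + b^2 := by
      nlinarith [mul_nonneg (by linarith : (0:ℝ) ≤ 1+r) (sq_nonneg (a-1+b))]
    have haux := aux_phi β (a-1-b) hβ
    have hA : P*(1/σ2)*(1-r)*(m*(1-m))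
        ≤ P*(1/σ2)*(1-r)*((a-1-b)^2/4 + β * max 0 ((a-1-b)+1)) :=
      mul_le_mul_of_nonneg_left haux (by positivity)
    have hB : (P*(1/σ2)/2)*((1-r)*(a-1-b)^2/2)
        ≤ (P*(1/σ2)/2)*((a-1)^2 + 2*r*(a-1)*b + b^2) :=
      mul_le_mul_of_nonneg_left hQ (by positivity)
    have hlog3 : (1/2) * (Real.log sV - Real.log σ2) ≤ 1/2*(1/σ2)*sV - 1/2 := by
      have h4 : sV / σ2 = 1/2*(1/σ2)*sV*2 := by field_simp
      rw [h4] at hlog2; linarith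
    rw [hlogsV, hmax, hC,
      show (1:ℝ)/(2*σ2) = 1/2*(1/σ2) by ring,
      show β*P/σ2 = β*P*(1/σ2) by ring,
      show P/σ2 = P*(1/σ2) by ring]
    linarith [hA, hB, hlog3]
  exact le_antisymm (csInf_le ⟨C, hlb⟩ hmem) (le_csInf ⟨C, hmem⟩ hlb)
end

section
/- For any ρ' ∈ [-1,1] and any λ ∈ [0, 1/2], the infimum over (a,b) ∈ ℝ² of (P/(2σ²))·[(a-1)² + 2ρ'(a-1)b + b²] + (λP/σ²)·(1-ρ')(a-b) equals (P/σ²)·λ(1-λ)·(1-ρ'). -/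
/-- the infimum over (a,b) of the quadratic-plus-linear expression
equals (P/σ²)·λ(1-λ)·(1-ρ'). -/
theorem stmt_5 (P σ2 r lam : ℝ) (hP : 0 < P) (hσ : 0 < σ2)
    (hr : r ∈ Set.Icc (-1 : ℝ) 1) (hlam : lam ∈ Set.Icc (0 : ℝ) (1/2)) :
    sInf {v : ℝ | ∃ a b : ℝ,
        v = (P/(2*σ2)) * ((a-1)^2 + 2*r*(a-1)*b + b^2)
            + (lam*P/σ2) * (1 - r) * (a - b)}
      = (P/σ2) * lam * (1 - lam) * (1 - r) := by
  obtain ⟨hr1, hr2⟩ := hr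
  have hσ2 : σ2 ≠ 0 := ne_of_gt hσ
  have hlow : ∀ v ∈ {v : ℝ | ∃ a b : ℝ,
      v = (P/(2*σ2)) * ((a-1)^2 + 2*r*(a-1)*b + b^2)
          + (lam*P/σ2) * (1 - r) * (a - b)},
      (P/σ2) * lam * (1 - lam) * (1 - r) ≤ v := by
    rintro v ⟨a, b, rfl⟩
    have key : (P/(2*σ2)) * ((a-1)^2 + 2*r*(a-1)*b + b^2)
        + (lam*P/σ2) * (1 - r) * (a - b)
        - (P/σ2) * lam * (1 - lam) * (1 - r)
        = (P/(2*σ2)) * ((a-1+lam+r*(b-lam))^2 + (1-r^2)*(b-lam)^2) := by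
      field_simp
      ring
    have h1 : 0 ≤ (a-1+lam+r*(b-lam))^2 + (1-r^2)*(b-lam)^2 := by
      have : 0 ≤ (1-r^2) := by nlinarith
      positivity
    have h2 : 0 < P/(2*σ2) := by positivity
    nlinarith [mul_nonneg h2.le h1]
  apply le_antisymm
  · apply csInf_le ⟨_, hlow⟩
    exact ⟨1-lam, lam, by field_simp; ring⟩
  · exact le_csInf ⟨_, 1-lam, lam, rfl⟩ hlow
end

section
/- The lower bound on the typical-random-code exponent for the AWGN channel, E⁻(R) := inf over |ρ| ≤ √(1-e^{-4R}) of [(snr/4)(1-ρ) - (1/2)ln(1-ρ²) - R], equals (snr/4)(1-√(1-e^{-4R})) + R for R ≤ R*, and equals snr/4 - (snr²/8)/(1+√(1+snr²/4)) + (1/2)ln((1+√(1+snr²/4))/2) - R for R ≥ R*, where R* = (1/4)ln((1+√(1+snr²/4))/2). -/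
private lemma aux_cancel (a x L ρ : ℝ) (hx : 0 < 1 - x^2)
    (hkey : x ≤ a*(1-x^2)) (hsign : 0 ≤ x - ρ)
    (hlog2 : L * (1-x^2) ≤ x^2 - ρ^2) : L ≤ 2*a*(x-ρ) := by
  have h1 : L*(1-x^2) ≤ 2*x*(x-ρ) := by nlinarith [sq_nonneg (x-ρ)]
  have h2 : 2*x*(x-ρ) ≤ 2*a*(x-ρ)*(1-x^2) := by
    nlinarith [mul_le_mul_of_nonneg_right hkey hsign]
  exact le_of_mul_le_mul_right (by linarith) hx

private lemma aux_cancel2 (a x L ρ : ℝ) (hx : 0 < 1 - x^2)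
    (hkey : a*(1-x^2) = x)
    (hlog2 : L * (1-x^2) ≤ x^2 - ρ^2) : L ≤ 2*a*(x-ρ) := by
  have h1 : L*(1-x^2) ≤ 2*x*(x-ρ) := by nlinarith [sq_nonneg (x-ρ)]
  have h2 : 2*a*(x-ρ)*(1-x^2) = 2*x*(x-ρ) := by linear_combination (2*(x-ρ))*hkey
  exact le_of_mul_le_mul_right (by linarith) hx

private lemma aux_mono (a x y : ℝ) (hx0 : 0 ≤ x) (hy0 : 0 ≤ y) (hxy : x ≤ y)
    (hy1 : 0 < 1 - y^2) (ha : a*(1-y^2) = y) : x ≤ a*(1-x^2) := by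
  have h3 : a*(1-x^2)*(1-y^2) = y*(1-x^2) := by linear_combination (1-x^2)*ha
  have h2 : x*(1-y^2) ≤ y*(1-x^2) := by
    nlinarith [mul_nonneg (sub_nonneg.mpr hxy) (mul_nonneg hx0 hy0)]
  exact le_of_mul_le_mul_right (by linarith) hy1

private lemma aux_log (x ρ : ℝ) (hρpos : 0 < 1 - ρ^2) (hxpos : 0 < 1 - x^2) :
    (Real.log (1-ρ^2) - Real.log (1-x^2)) * (1-x^2) ≤ x^2 - ρ^2 := by
  have h := Real.log_le_sub_one_of_pos (div_pos hρpos hxpos)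
  rw [Real.log_div hρpos.ne' hxpos.ne'] at h
  have heq : (1-ρ^2)/(1-x^2) - 1 = (x^2-ρ^2)/(1-x^2) := by field_simp; ring
  rw [heq] at h
  exact (le_div_iff₀ hxpos).mp h

set_option maxHeartbeats 1000000 in
/-- the AWGN TRC lower bound E⁻(R) equals the two-piece formula
around R* = (1/4)ln((1+√(1+snr²/4))/2). -/
theorem stmt_7 (snr R : ℝ) (hs : 0 < snr) (hR : 0 ≤ R) :
    (R ≤ (1/4) * Real.log ((1 + Real.sqrt (1 + snr^2/4))/2) →
      sInf {v : ℝ | ∃ ρ : ℝ, |ρ| ≤ Real.sqrt (1 - Real.exp (-4*R)) ∧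
          v = (snr/4)*(1 - ρ) - (1/2) * Real.log (1 - ρ^2) - R}
        = (snr/4) * (1 - Real.sqrt (1 - Real.exp (-4*R))) + R) ∧
    ((1/4) * Real.log ((1 + Real.sqrt (1 + snr^2/4))/2) ≤ R →
      sInf {v : ℝ | ∃ ρ : ℝ, |ρ| ≤ Real.sqrt (1 - Real.exp (-4*R)) ∧
          v = (snr/4)*(1 - ρ) - (1/2) * Real.log (1 - ρ^2) - R}
        = snr/4 - (snr^2/8) / (1 + Real.sqrt (1 + snr^2/4))
            + (1/2) * Real.log ((1 + Real.sqrt (1 + snr^2/4))/2) - R) := by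
  set s : ℝ := Real.sqrt (1 + snr^2/4) with hsdef
  have hs2 : s^2 = 1 + snr^2/4 := Real.sq_sqrt (by positivity)
  have hs0 : 0 ≤ s := Real.sqrt_nonneg _
  have hs1 : 1 < s := by nlinarith [sq_nonneg snr]
  set c : ℝ := snr / (2*(1+s)) with hcdef
  have hc0 : 0 < c := by positivity
  have hc1 : 1 - c^2 = 2/(1+s) := by
    rw [hcdef]; field_simp; nlinarith
  have hcpos : 0 < 1 - c^2 := by rw [hc1]; positivity
  have hcc1 : c < 1 := by nlinarith
  have hac : snr/4 * (1 - c^2) = c := by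
    rw [hc1, hcdef]; field_simp; ring
  set r : ℝ := Real.sqrt (1 - Real.exp (-4*R)) with hrdef
  have hexp1 : Real.exp (-4*R) ≤ 1 := Real.exp_le_one_iff.mpr (by linarith)
  have hr2 : r^2 = 1 - Real.exp (-4*R) := Real.sq_sqrt (by linarith)
  have hr0 : 0 ≤ r := Real.sqrt_nonneg _
  have hr1 : r < 1 := by nlinarith [Real.exp_pos (-4*R)]
  have hrpos : 0 < 1 - r^2 := by nlinarith
  have hlr : Real.log (1 - r^2) = -4*R := by
    rw [hr2]; simp [Real.log_exp]
  have hRstar : Real.exp (-4*((1/4) * Real.log ((1+s)/2))) = 2/(1+s) := by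
    rw [show -4*((1/4) * Real.log ((1+s)/2)) = -Real.log ((1+s)/2) by ring,
      Real.exp_neg, Real.exp_log (by linarith)]
    field_simp
  constructor
  · intro hle
    apply IsLeast.csInf_eq
    constructor
    · exact ⟨r, by rw [abs_of_nonneg hr0],
        by rw [show 1 - r^2 = Real.exp (-4*R) by linarith, Real.log_exp]; ring⟩
    · rintro v ⟨ρ, hρ, rfl⟩
      rw [abs_le] at hρ
      obtain ⟨hρ1, hρ2⟩ := hρ
      have hρpos : 0 < 1 - ρ^2 := by nlinarith
      have hexp2 : 2/(1+s) ≤ Real.exp (-4*R) := by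
        rw [← hRstar]; exact Real.exp_le_exp.mpr (by linarith)
      have hr2c : r^2 ≤ c^2 := by linarith
      have hrc : r ≤ c := by nlinarith
      have hkey : r ≤ snr/4 * (1 - r^2) := aux_mono _ _ _ hr0 hc0.le hrc hcpos hac
      have hL := aux_cancel (snr/4) r (Real.log (1-ρ^2) - Real.log (1-r^2)) ρ
        hrpos hkey (by linarith) (aux_log r ρ hρpos hrpos)
      rw [hlr] at hL
      linarith
  · intro hle
    apply IsLeast.csInf_eq
    have hlc : Real.log (1 - c^2) = -Real.log ((1+s)/2) := by
      rw [hc1, show (2:ℝ)/(1+s) = ((1+s)/2)⁻¹ by field_simp, Real.log_inv]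
    have hval : snr/4 - (snr^2/8) / (1 + s) + (1/2) * Real.log ((1+s)/2) - R
        = (snr/4)*(1 - c) - (1/2) * Real.log (1 - c^2) - R := by
      rw [hlc, hcdef]; field_simp; ring
    have hexp2 : Real.exp (-4*R) ≤ 2/(1+s) := by
      rw [← hRstar]; exact Real.exp_le_exp.mpr (by linarith)
    have hc2r : c^2 ≤ r^2 := by linarith
    have hcr : c ≤ r := by nlinarith
    constructor
    · exact ⟨c, by rw [abs_of_nonneg hc0.le]; exact hcr, hval⟩
    · rintro v ⟨ρ, hρ, rfl⟩
      rw [abs_le] at hρ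
      obtain ⟨hρ1, hρ2⟩ := hρ
      have hρpos : 0 < 1 - ρ^2 := by nlinarith
      have hL := aux_cancel2 (snr/4) c (Real.log (1-ρ^2) - Real.log (1-c^2)) ρ
        hcpos hac (aux_log c ρ hρpos hcpos)
      rw [hval]
      linarith
end

section
/- The function E⁻(R) defined piecewise as (snr/4)(1-√(1-e^{-4R})) + R for 0 ≤ R ≤ R* and as the affine function snr/4 - (snr²/8)/(1+√(1+snr²/4)) + (1/2)ln((1+√(1+snr²/4))/2) - R for R ≥ R*, with R* = (1/4)ln((1+√(1+snr²/4))/2), is continuous and continuously differentiable at R = R*, with derivative -1 there. -/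
/-- the piecewise E⁻(R) is continuous and differentiable at R*,
with derivative -1; moreover the curvy piece itself has derivative -1 at R*. -/
theorem stmt_8 (snr : ℝ) (hs : 0 < snr) :
    ContinuousAt
      (fun R : ℝ =>
        if R ≤ (1/4) * Real.log ((1 + Real.sqrt (1 + snr^2/4))/2) then
          (snr/4) * (1 - Real.sqrt (1 - Real.exp (-4*R))) + R
        else
          snr/4 - (snr^2/8) / (1 + Real.sqrt (1 + snr^2/4))
            + (1/2) * Real.log ((1 + Real.sqrt (1 + snr^2/4))/2) - R)
      ((1/4) * Real.log ((1 + Real.sqrt (1 + snr^2/4))/2)) ∧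
    HasDerivAt
      (fun R : ℝ =>
        if R ≤ (1/4) * Real.log ((1 + Real.sqrt (1 + snr^2/4))/2) then
          (snr/4) * (1 - Real.sqrt (1 - Real.exp (-4*R))) + R
        else
          snr/4 - (snr^2/8) / (1 + Real.sqrt (1 + snr^2/4))
            + (1/2) * Real.log ((1 + Real.sqrt (1 + snr^2/4))/2) - R)
      (-1) ((1/4) * Real.log ((1 + Real.sqrt (1 + snr^2/4))/2)) ∧
    HasDerivAt
      (fun R : ℝ => (snr/4) * (1 - Real.sqrt (1 - Real.exp (-4*R))) + R)
      (-1) ((1/4) * Real.log ((1 + Real.sqrt (1 + snr^2/4))/2)) := by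
  set s := Real.sqrt (1 + snr^2/4) with hsdef
  have hs2 : s^2 = 1 + snr^2/4 := Real.sq_sqrt (by positivity)
  have hs0 : 0 ≤ s := Real.sqrt_nonneg _
  have hs1 : 1 < s := by nlinarith
  set Rs := (1/4) * Real.log ((1 + s)/2) with hRsdef
  have ha : (0:ℝ) < (1 + s)/2 := by linarith
  have hexp : Real.exp (-4*Rs) = 2/(1+s) := by
    rw [hRsdef, show -4 * ((1/4) * Real.log ((1+s)/2)) = - Real.log ((1+s)/2) by ring,
      Real.exp_neg, Real.exp_log ha]
    rw [inv_div]
  have hu : 1 - Real.exp (-4*Rs) = (s-1)/(s+1) := by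
    rw [hexp]; field_simp; ring
  have hupos : 0 < 1 - Real.exp (-4*Rs) := by
    rw [hu]; exact div_pos (by linarith) (by linarith)
  have hsq : Real.sqrt (1 - Real.exp (-4*Rs)) = (snr/2)/(s+1) := by
    rw [hu, show (s-1)/(s+1) = ((snr/2)/(s+1))^2 by field_simp; nlinarith]
    exact Real.sqrt_sq (by positivity)
  -- derivative of the curvy piece
  have hderiv : HasDerivAt (fun R : ℝ =>
      (snr/4) * (1 - Real.sqrt (1 - Real.exp (-4*R))) + R) (-1) Rs := by
    have h1 : HasDerivAt (fun R : ℝ => 1 - Real.exp (-4*R))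
        (-(Real.exp (-4*Rs) * (-4*1))) Rs :=
      (((hasDerivAt_id Rs).const_mul (-4)).exp).const_sub 1
    have h2 := (h1.sqrt (ne_of_gt hupos)).const_sub 1
    have h3 := (h2.const_mul (snr/4)).add (hasDerivAt_id Rs)
    refine h3.congr_deriv ?_
    rw [hsq, hexp]
    have h4 : s + 1 ≠ 0 := by linarith
    have h5 : snr ≠ 0 := ne_of_gt hs
    field_simp
    ring
  -- value agreement at Rs
  have hval : (snr/4) * (1 - Real.sqrt (1 - Real.exp (-4*Rs))) + Rs
      = snr/4 - (snr^2/8)/(1+s) + (1/2) * Real.log ((1+s)/2) - Rs := by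
    rw [hsq, hRsdef]
    have h4 : s + 1 ≠ 0 := by linarith
    field_simp
    ring
  set F : ℝ → ℝ := fun R =>
    if R ≤ Rs then (snr/4) * (1 - Real.sqrt (1 - Real.exp (-4*R))) + R
    else snr/4 - (snr^2/8)/(1+s) + (1/2) * Real.log ((1+s)/2) - R with hF
  have hleft : HasDerivWithinAt F (-1) (Set.Iic Rs) Rs :=
    (hderiv.hasDerivWithinAt).congr
      (fun x hx => by simp only [hF, if_pos (Set.mem_Iic.mp hx)])
      (by simp only [hF, if_pos le_rfl])
  have hstraight : HasDerivAt (fun R : ℝ =>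
      snr/4 - (snr^2/8)/(1+s) + (1/2) * Real.log ((1+s)/2) - R) (-1) Rs := by
    simpa using (hasDerivAt_id Rs).const_sub
      (snr/4 - (snr^2/8)/(1+s) + (1/2) * Real.log ((1+s)/2))
  have hright : HasDerivWithinAt F (-1) (Set.Ici Rs) Rs := by
    refine (hstraight.hasDerivWithinAt).congr (fun x hx => ?_) ?_
    · by_cases h : x ≤ Rs
      · have hx' : x = Rs := le_antisymm h (Set.mem_Ici.mp hx)
        simp only [hF]
        rw [hx', if_pos le_rfl]
        exact hval
      · simp only [hF, if_neg h]
    · simp only [hF]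
      rw [if_pos le_rfl]
      exact hval
  have hFd : HasDerivAt F (-1) Rs := by
    have := hleft.union hright
    rw [Set.Iic_union_Ici] at this
    exact hasDerivWithinAt_univ.mp this
  exact ⟨hFd.continuousAt, hFd, hderiv⟩
end
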